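/- For the exponential weights algorithm with learning rate eta > 0 on K experts with losses in [0,1], the expected loss at each round exceeds the mix loss by at most eta/8: sum_i w_{i,t} * l_{i,t} <= m_t + eta/8. Consequently the regret after T rounds satisfies sum_t sum_i w_{i,t}*l_{i,t} - min_i L_{i,T} <= log(K)/eta + eta*T/8. -/

import Mathlib

open Finset


lemma quad_fact (E D : ℝ) (hE : 0 ≤ E) (hED : E ≤ D) :
    E * D - E * E ≤ 1 / 4 * D ^ 2 := by nlinarith [sq_nonneg (D - 2 * E)]

lemma hoeff_aux (p c : ℝ) (hp0 : 0 ≤ p) (hp1 : p ≤ 1) (hc : c ≤ 0) :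
    Real.log (1 - p + p * Real.exp c) ≤ c * p + c ^ 2 / 8 := by
  set D : ℝ → ℝ := fun x => 1 - p + p * Real.exp x with hDdef
  have hD : ∀ x, 0 < D x := by
    intro x
    have h := Real.exp_pos x
    simp only [hDdef]
    rcases eq_or_lt_of_le hp0 with h0 | h0
    · nlinarith
    · nlinarith [mul_pos h0 h]
  have hDderiv : ∀ x, HasDerivAt D (p * Real.exp x) x := by
    intro x
    exact ((Real.hasDerivAt_exp x).const_mul p).const_add (1 - p)
  set g : ℝ → ℝ := fun x => Real.log (D x) - (x * p + x ^ 2 / 8) with hgdef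
  set g' : ℝ → ℝ := fun x => p * Real.exp x / D x - (p + x / 4) with hg'def
  have hgd : ∀ x, HasDerivAt g (g' x) x := by
    intro x
    have h1 : HasDerivAt (fun x => Real.log (D x)) (p * Real.exp x / D x) x :=
      (hDderiv x).log (hD x).ne'
    have h2 : HasDerivAt (fun x : ℝ => x * p + x ^ 2 / 8) (p + x / 4) x := by
      have : HasDerivAt (fun y : ℝ => y * p + y ^ 2 / 8) (1 * p + ((2 : ℕ) : ℝ) * x ^ (2 - 1) / 8) x := ((hasDerivAt_id x).mul_const p).add ((hasDerivAt_pow 2 x).div_const 8)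
      convert this using 1
      ring
    exact h1.sub h2
  set g'' : ℝ → ℝ := fun x =>
    (p * Real.exp x * D x - p * Real.exp x * (p * Real.exp x)) / (D x) ^ 2 - (1 / 4) with hg''def
  have hgd' : ∀ x, HasDerivAt g' (g'' x) x := by
    intro x
    have h1 : HasDerivAt (fun x => p * Real.exp x / D x)
        ((p * Real.exp x * D x - p * Real.exp x * (p * Real.exp x)) / (D x) ^ 2) x :=
      ((Real.hasDerivAt_exp x).const_mul p).div (hDderiv x) (hD x).ne'
    have h2 : HasDerivAt (fun x : ℝ => p + x / 4) (1 / 4) x := by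
      simpa using ((hasDerivAt_id x).div_const 4).const_add p
    exact h1.sub h2
  have hg''nonpos : ∀ x, g'' x ≤ 0 := by
    intro x
    have hE0 : 0 ≤ p * Real.exp x := by positivity
    have hED : p * Real.exp x ≤ D x := by
      simp only [hDdef]; nlinarith
    have hDx := hD x
    have key : (p * Real.exp x * D x - p * Real.exp x * (p * Real.exp x)) / (D x) ^ 2 ≤ 1 / 4 := by
      rw [div_le_iff₀ (by positivity)]
      exact quad_fact (p * Real.exp x) (D x) hE0 hED
    simp only [hg''def]
    linarith
  have hg'anti : Antitone g' := by
    apply antitone_of_deriv_nonpos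
    · exact fun x => (hgd' x).differentiableAt
    · intro x
      rw [(hgd' x).deriv]
      exact hg''nonpos x
  have hg'0 : g' 0 = 0 := by
    simp only [hg'def, hDdef]
    simp
  have hg'nonneg : ∀ x ≤ (0:ℝ), 0 ≤ g' x := by
    intro x hx
    rw [← hg'0]
    exact hg'anti hx
  have hgmono : MonotoneOn g (Set.Iic 0) := by
    apply monotoneOn_of_deriv_nonneg (convex_Iic 0)
    · exact (fun x _ => ((hgd x).differentiableAt).continuousAt.continuousWithinAt)
    · intro x hx
      exact ((hgd x).differentiableAt).differentiableWithinAt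
    · intro x hx
      rw [(hgd x).deriv]
      exact hg'nonneg x (le_of_lt (by simpa using hx))
  have hg0 : g 0 = 0 := by
    simp only [hgdef, hDdef]
    simp
  have := hgmono (Set.mem_Iic.2 hc) (Set.mem_Iic.2 le_rfl) hc
  rw [hg0] at this
  simp only [hgdef] at this
  linarith

set_option maxHeartbeats 1000000 in
/-- The expected loss exceeds the mix loss by at most `η/8` at each round, and the
exponential weights regret is at most `log K / η + η T / 8`. -/
theorem exp_weights_regret_bound (K T : ℕ) (hK : 0 < K) (η : ℝ) (hη : 0 < η)
    (l : Fin T → Fin K → ℝ) (hl : ∀ t i, l t i ∈ Set.Icc (0:ℝ) 1)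
    (L : Fin T → Fin K → ℝ) (hL : ∀ t i, L t i = ∑ s ∈ univ.filter (· < t), l s i)
    (w : Fin T → Fin K → ℝ)
    (hw : ∀ t i, w t i = Real.exp (-η * L t i) / ∑ j, Real.exp (-η * L t j))
    (m : Fin T → ℝ)
    (hm : ∀ t, m t = -(1 / η) * Real.log (∑ i, w t i * Real.exp (-η * l t i))) :
    (∀ t, ∑ i, w t i * l t i ≤ m t + η / 8) ∧
    (∑ t, ∑ i, w t i * l t i) - (⨅ i, ∑ t, l t i) ≤ Real.log K / η + η * T / 8 := by
  have hKne : (univ : Finset (Fin K)).Nonempty := univ_nonempty_iff.2 (Fin.pos_iff_nonempty.1 hK)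
  -- total weight as function of round number
  set W : ℕ → ℝ := fun n =>
    ∑ j, Real.exp (-η * ∑ s ∈ univ.filter (fun s : Fin T => (s : ℕ) < n), l s j) with hWdef
  have hWpos : ∀ n, 0 < W n := fun n =>
    Finset.sum_pos (fun j _ => Real.exp_pos _) hKne
  have hW0 : W 0 = K := by
    simp [hWdef]
  -- sum of unnormalized weights at round t
  have hSW : ∀ t : Fin T, (∑ j, Real.exp (-η * L t j)) = W t.val := by
    intro t
    simp only [hWdef, hL]
    congr 1
  have hSpos : ∀ t : Fin T, 0 < ∑ j, Real.exp (-η * L t j) := by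
    intro t; rw [hSW]; exact hWpos _
  have hwpos : ∀ t i, 0 < w t i := by
    intro t i; rw [hw]; exact div_pos (Real.exp_pos _) (hSpos t)
  have hwsum : ∀ t : Fin T, ∑ i, w t i = 1 := by
    intro t
    simp only [hw]
    rw [← Finset.sum_div, div_self (hSpos t).ne']
  -- filter step lemma
  have hfilt : ∀ t : Fin T, (univ.filter (fun s : Fin T => (s : ℕ) < t.val + 1))
      = insert t (univ.filter (fun s : Fin T => (s : ℕ) < t.val)) := by
    intro t
    ext s
    simp only [mem_filter, mem_univ, true_and, mem_insert, Fin.ext_iff]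
    omega
  have hstep : ∀ t : Fin T,
      (∑ i, Real.exp (-η * L t i) * Real.exp (-η * l t i)) = W (t.val + 1) := by
    intro t
    simp only [hWdef]
    refine Finset.sum_congr rfl fun i _ => ?_
    rw [← Real.exp_add, hfilt t, Finset.sum_insert (by simp), hL]
    congr 1
    have : (univ.filter (· < t)) = (univ.filter (fun s : Fin T => (s : ℕ) < t.val)) := by
      congr 1
    rw [this]
    ring
  -- the inner sum in the mix loss
  have hZ : ∀ t : Fin T, (∑ i, w t i * Real.exp (-η * l t i)) = W (t.val + 1) / W t.val := by
    intro t
    simp only [hw, div_mul_eq_mul_div, ← Finset.sum_div]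
    rw [hstep t, hSW t]
  -- mix loss as telescoping difference
  have hm' : ∀ t : Fin T, m t = (1 / η) * (Real.log (W t.val) - Real.log (W (t.val + 1))) := by
    intro t
    rw [hm, hZ, Real.log_div (hWpos _).ne' (hWpos _).ne']
    ring
  -- sum of mix losses
  have hmsum : (∑ t, m t) = (1 / η) * (Real.log K - Real.log (W T)) := by
    have h1 : (∑ t, m t)
        = ∑ n ∈ range T, (1 / η) * (Real.log (W n) - Real.log (W (n + 1))) := by
      rw [← Fin.sum_univ_eq_sum_range (fun n => (1 / η) * (Real.log (W n) - Real.log (W (n + 1)))) T]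
      exact Finset.sum_congr rfl fun t _ => hm' t
    rw [h1, ← Finset.mul_sum, Finset.sum_range_sub' (fun n => Real.log (W n)), hW0]
  -- Part 1: per-round bound
  have part1 : ∀ t, ∑ i, w t i * l t i ≤ m t + η / 8 := by
    intro t
    set p := ∑ i, w t i * l t i with hpdef
    have hp0 : 0 ≤ p :=
      Finset.sum_nonneg fun i _ => mul_nonneg (hwpos t i).le (hl t i).1
    have hp1 : p ≤ 1 := by
      rw [hpdef, ← hwsum t]
      exact Finset.sum_le_sum fun i _ =>
        mul_le_of_le_one_right (hwpos t i).le (hl t i).2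
    have hZpos : 0 < ∑ i, w t i * Real.exp (-η * l t i) :=
      Finset.sum_pos (fun i _ => mul_pos (hwpos t i) (Real.exp_pos _)) hKne
    have hZle : (∑ i, w t i * Real.exp (-η * l t i)) ≤ 1 - p + p * Real.exp (-η) := by
      have hpt : ∀ i, Real.exp (-η * l t i) ≤ 1 - l t i + l t i * Real.exp (-η) := by
        intro i
        obtain ⟨h0, h1⟩ := hl t i
        have := convexOn_exp.2 (Set.mem_univ (0:ℝ)) (Set.mem_univ (-η))
          (by linarith : (0:ℝ) ≤ 1 - l t i) h0 (by ring)
        simp only [smul_eq_mul, mul_zero, Real.exp_zero, mul_one] at this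
        calc Real.exp (-η * l t i) = Real.exp ((1 - l t i) * 0 + l t i * (-η)) := by ring_nf
          _ ≤ (1 - l t i) * 1 + l t i * Real.exp (-η) := by
              simpa using this
          _ = 1 - l t i + l t i * Real.exp (-η) := by ring
      calc (∑ i, w t i * Real.exp (-η * l t i))
          ≤ ∑ i, w t i * (1 - l t i + l t i * Real.exp (-η)) :=
            Finset.sum_le_sum fun i _ => mul_le_mul_of_nonneg_left (hpt i) (hwpos t i).le
        _ = (∑ i, w t i) - (∑ i, w t i * l t i)
            + (∑ i, w t i * l t i) * Real.exp (-η) := by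
            rw [Finset.sum_mul, ← Finset.sum_sub_distrib, ← Finset.sum_add_distrib]
            exact Finset.sum_congr rfl fun i _ => by ring
        _ = 1 - p + p * Real.exp (-η) := by rw [hwsum t, hpdef]
    have hDpos : (0:ℝ) < 1 - p + p * Real.exp (-η) := lt_of_lt_of_le hZpos hZle
    have hlog : Real.log (∑ i, w t i * Real.exp (-η * l t i))
        ≤ (-η) * p + (-η) ^ 2 / 8 := by
      calc Real.log (∑ i, w t i * Real.exp (-η * l t i))
          ≤ Real.log (1 - p + p * Real.exp (-η)) := Real.log_le_log hZpos hZle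
        _ ≤ (-η) * p + (-η) ^ 2 / 8 := hoeff_aux p (-η) hp0 hp1 (by linarith)
    rw [hm]
    have hη' : η ≠ 0 := hη.ne'
    have h2 : -(1 / η) * ((-η) * p + (-η) ^ 2 / 8) = p - η / 8 := by
      field_simp
      ring
    have h3 := mul_le_mul_of_nonpos_left hlog
      (neg_nonpos.2 (by positivity : (0:ℝ) ≤ 1/η))
    rw [h2] at h3
    linarith
  refine ⟨part1, ?_⟩
  -- Part 2
  have : Nonempty (Fin K) := ⟨⟨0, hK⟩⟩
  obtain ⟨i0, hi0⟩ := Finite.exists_min (fun i : Fin K => ∑ t, l t i)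
  have hinf : (∑ t, l t i0) ≤ ⨅ i, ∑ t, l t i := le_ciInf hi0
  -- log (W T) ≥ -η * ∑ t, l t i0
  have hWT : -η * (∑ t, l t i0) ≤ Real.log (W T) := by
    rw [Real.le_log_iff_exp_le (hWpos T)]
    have hfu : (univ.filter (fun s : Fin T => (s : ℕ) < T)) = univ := by
      apply Finset.filter_true_of_mem
      intro s _; exact s.isLt
    have h : Real.exp (-η * ∑ s ∈ univ.filter (fun s : Fin T => (s : ℕ) < T), l s i0) ≤ W T := by
      simp only [hWdef]
      exact Finset.single_le_sum
        (f := fun j => Real.exp (-η * ∑ s ∈ univ.filter (fun s : Fin T => (s : ℕ) < T), l s j))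
        (fun j _ => (Real.exp_pos _).le) (mem_univ i0)
    rwa [hfu] at h
  have hsum_m : (∑ t, m t) ≤ Real.log K / η + ∑ t, l t i0 := by
    rw [hmsum]
    have h1 : Real.log K - Real.log (W T) ≤ Real.log K + η * ∑ t, l t i0 := by
      nlinarith [hWT]
    calc (1 / η) * (Real.log K - Real.log (W T))
        ≤ (1 / η) * (Real.log K + η * ∑ t, l t i0) := by
          apply mul_le_mul_of_nonneg_left h1 (by positivity)
      _ = Real.log K / η + ∑ t, l t i0 := by
          field_simp
  have htot : (∑ t, ∑ i, w t i * l t i) ≤ (∑ t, m t) + η * T / 8 := by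
    calc (∑ t, ∑ i, w t i * l t i) ≤ ∑ t, (m t + η / 8) :=
        Finset.sum_le_sum fun t _ => part1 t
      _ = (∑ t, m t) + η * T / 8 := by
        rw [Finset.sum_add_distrib, Finset.sum_const, card_univ, Fintype.card_fin]
        ring
  linarith
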